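/- Let A be a Hermitian n×n matrix with simple spectrum α₁ < α₂ < ... < αₙ, and let β₁, ..., βₙ be real numbers strictly interlacing with the αᵢ (i.e., α₁ < β₁ < α₂ < β₂ < ... < αₙ < βₙ). Then there exists a Hermitian matrix B with eigenvalues exactly β₁, ..., βₙ such that rank(A − B) = 1. -/

import Mathlib

open Polynomial


open Finset in
private lemma det_diag_add_vecMulVec {K : Type*} [Field K] {n : Type*} [Fintype n]
    [DecidableEq n] (d u v : n → K) (hd : ∀ i, d i ≠ 0) :
    (Matrix.diagonal d + Matrix.vecMulVec u v).det
      = (∏ i, d i) + ∑ j, u j * v j * ∏ i ∈ univ.erase j, d i := by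
  have hdet : IsUnit (Matrix.diagonal d).det := by
    rw [Matrix.det_diagonal]
    exact isUnit_iff_ne_zero.mpr (Finset.prod_ne_zero_iff.mpr fun i _ => hd i)
  have hinv : (Matrix.diagonal d)⁻¹ = Matrix.diagonal (fun i => (d i)⁻¹) :=
    Matrix.inv_eq_right_inv (by
      rw [Matrix.diagonal_mul_diagonal]
      convert Matrix.diagonal_one using 2
      funext i
      exact mul_inv_cancel₀ (hd i))
  rw [Matrix.vecMulVec_eq Unit, Matrix.det_add_replicateCol_mul_replicateRow hdet, Matrix.det_diagonal,
    hinv, ← Matrix.replicateRow_vecMul, Matrix.det_unique, Matrix.add_apply,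
    Matrix.one_apply_eq, Matrix.replicateRow_mul_replicateCol_apply]
  rw [dotProduct]
  rw [mul_add, mul_one, Finset.mul_sum]
  congr 1
  refine Finset.sum_congr rfl fun i _ => ?_
  rw [Matrix.vecMul_diagonal]
  rw [← Finset.prod_erase_mul univ d (Finset.mem_univ i)]
  rw [show (∏ x ∈ univ.erase i, d x) * d i * (v i * (d i)⁻¹ * u i)
      = (∏ x ∈ univ.erase i, d x) * u i * v i * (d i * (d i)⁻¹) from by ring,
    mul_inv_cancel₀ (hd i), mul_one]
  ring

open Finset in
private lemma prod_X_sub_C_sub_sum_eq {n : ℕ} (hn : 0 < n) (e b : Fin n → ℂ)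
    (he : Function.Injective e) (t : Fin n → ℂ)
    (ht : ∀ k, t k * ∏ i ∈ univ.erase k, (e k - e i) = - ∏ i, (e k - b i)) :
    (∏ i, (X - C (e i))) - ∑ j, C (t j) * ∏ i ∈ univ.erase j, (X - C (e i))
      = ∏ i, (X - C (b i)) := by
  have hmone : ∀ (s : Finset (Fin n)) (f : Fin n → ℂ), (∏ i ∈ s, (X - C (f i))).Monic :=
    fun s f => monic_prod_of_monic _ _ fun i _ => monic_X_sub_C _
  have hdeg : ∀ (s : Finset (Fin n)) (f : Fin n → ℂ),
      (∏ i ∈ s, (X - C (f i))).degree = (s.card : WithBot ℕ) := by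
    intro s f
    rw [degree_eq_natDegree (hmone s f).ne_zero, natDegree_prod _ _
      (fun i _ => X_sub_C_ne_zero (f i))]
    simp [natDegree_X_sub_C]
  apply eq_of_degree_sub_lt_of_eval_index_eq (v := e) univ (he.injOn)
  · have hcard : ((#(univ : Finset (Fin n)) : ℕ) : WithBot ℕ) = (n : WithBot ℕ) := by simp
    rw [hcard, sub_right_comm]
    refine lt_of_le_of_lt (degree_sub_le _ _) (max_lt ?_ ?_)
    · refine lt_of_lt_of_le (degree_sub_lt ?_ (hmone univ e).ne_zero ?_) ?_
      · rw [hdeg, hdeg]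
      · rw [(hmone univ e).leadingCoeff, (hmone univ b).leadingCoeff]
      · rw [hdeg]; simp
    · refine lt_of_le_of_lt (degree_sum_le _ _) ?_
      rw [Finset.sup_lt_iff (by exact WithBot.bot_lt_coe n)]
      intro j _
      refine lt_of_le_of_lt (degree_mul_le _ _) ?_
      refine lt_of_le_of_lt (add_le_add degree_C_le (le_of_eq (hdeg _ _))) ?_
      rw [zero_add]
      simp only [Finset.card_erase_of_mem (Finset.mem_univ j), Finset.card_univ,
        Fintype.card_fin]
      exact_mod_cast WithBot.coe_lt_coe.mpr (Nat.sub_lt hn one_pos)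
  · intro k _
    have h1 : (∏ i, (X - C (e i))).eval (e k) = 0 := by
      rw [eval_prod]
      exact Finset.prod_eq_zero (Finset.mem_univ k) (by simp)
    rw [eval_sub, h1, eval_finset_sum, eval_prod, zero_sub]
    rw [Finset.sum_eq_single k]
    · simp only [eval_mul, eval_C, eval_prod, eval_sub, eval_X]
      rw [ht k, neg_neg]
    · intro j _ hjk
      simp only [eval_mul, eval_C, eval_prod, eval_sub, eval_X]
      rw [Finset.prod_eq_zero (Finset.mem_erase.mpr ⟨hjk.symm, Finset.mem_univ k⟩) (sub_self (e k))]
      exact mul_zero _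
    · intro h; exact absurd (Finset.mem_univ k) h

private lemma charpoly_unitary_conj {n : Type*} [Fintype n] [DecidableEq n]
    (U : Matrix.unitaryGroup n ℂ) (M : Matrix n n ℂ) :
    ((U : Matrix n n ℂ) * M * star (U : Matrix n n ℂ)).charpoly = M.charpoly := by
  set Φ : Matrix n n ℂ →+* Matrix n n ℂ[X] := (C : ℂ →+* ℂ[X]).mapMatrix with hΦ
  have hUsU : Φ ↑U * Φ (star (U : Matrix n n ℂ)) = 1 := by
    rw [← map_mul, (Matrix.mem_unitaryGroup_iff).mp U.2, map_one]
  have key : Matrix.charmatrix ((U : Matrix n n ℂ) * M * star (U : Matrix n n ℂ))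
      = Φ ↑U * Matrix.charmatrix M * Φ (star (U : Matrix n n ℂ)) := by
    rw [Matrix.charmatrix]
    rw [Matrix.charmatrix]
    rw [map_mul, map_mul, Matrix.mul_sub, Matrix.sub_mul]
    congr 1
    rw [Matrix.mul_assoc]
    rw [(Matrix.scalar_commute X (fun r' => Commute.all X r') _).eq]
    rw [← Matrix.mul_assoc, hUsU, Matrix.one_mul]
  rw [Matrix.charpoly, key, Matrix.det_mul, Matrix.det_mul, Matrix.charpoly]
  rw [mul_comm (Φ (U : Matrix n n ℂ)).det, mul_assoc, ← Matrix.det_mul, hUsU,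
    Matrix.det_one, mul_one]


/-- Lemma (converse Cauchy interlacing): a Hermitian matrix with simple
spectrum admits a rank-one Hermitian perturbation realizing any strictly
interlacing spectrum. -/
theorem stmt_10 {n : ℕ} (hn : 0 < n) (A : Matrix (Fin n) (Fin n) ℂ)
    (hA : A.IsHermitian) (α β : Fin n → ℝ)
    (hαmono : StrictMono α)
    (hspec : A.charpoly = ∏ i, (X - C (α i : ℂ)))
    (hint1 : ∀ i, α i < β i)
    (hint2 : ∀ i j : Fin n, i < j → β i < α j) :
    ∃ B : Matrix (Fin n) (Fin n) ℂ, B.IsHermitian ∧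
      B.charpoly = ∏ i, (X - C (β i : ℂ)) ∧ (A - B).rank = 1 := by
  classical
  obtain ⟨U', e, hAspec⟩ : ∃ (U' : Matrix.unitaryGroup (Fin n) ℂ) (e : Fin n → ℝ),
      A = (U' : Matrix (Fin n) (Fin n) ℂ) * Matrix.diagonal (fun i => (e i : ℂ))
        * star (U' : Matrix (Fin n) (Fin n) ℂ) :=
    ⟨hA.eigenvectorUnitary, hA.eigenvalues, hA.spectral_theorem⟩
  set U : Matrix (Fin n) (Fin n) ℂ := (U' : Matrix (Fin n) (Fin n) ℂ) with hU
  set Dg : Matrix (Fin n) (Fin n) ℂ := Matrix.diagonal (fun i => (e i : ℂ)) with hDg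
  -- charpoly identification
  have heα : (∏ i, (X - C (α i : ℂ))) = ∏ i, (X - C (e i : ℂ)) := by
    rw [← hspec, hAspec, charpoly_unitary_conj U' Dg,
      Matrix.charpoly_of_upperTriangular Dg (Matrix.blockTriangular_diagonal _)]
    exact Finset.prod_congr rfl fun i _ => by rw [hDg, Matrix.diagonal_apply_eq]
  -- multiset equality of roots
  have hacinj : Function.Injective (fun i : Fin n => (α i : ℂ)) :=
    fun i j h => hαmono.injective (Complex.ofReal_injective h)
  have hms : (Finset.univ.val.map fun i : Fin n => (α i : ℂ))
      = Finset.univ.val.map (fun i : Fin n => (e i : ℂ)) := by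
    have h1 := congrArg Polynomial.roots heα
    rwa [show (∏ i, (X - C (α i : ℂ)))
        = ((Finset.univ.val.map fun i : Fin n => (α i : ℂ)).map fun a => X - C a).prod from by
        rw [Multiset.map_map]; rfl,
      show (∏ i, (X - C (e i : ℂ)))
        = ((Finset.univ.val.map fun i : Fin n => (e i : ℂ)).map fun a => X - C a).prod from by
        rw [Multiset.map_map]; rfl,
      Polynomial.roots_multiset_prod_X_sub_C, Polynomial.roots_multiset_prod_X_sub_C] at h1
  have hecinj : Function.Injective (fun i : Fin n => (e i : ℂ)) := by
    have hnod : (Finset.univ.val.map fun i : Fin n => (e i : ℂ)).Nodup := by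
      rw [← hms]; exact Finset.univ.nodup.map hacinj
    intro i j hij
    exact Multiset.inj_on_of_nodup_map hnod i (Finset.mem_univ i) j (Finset.mem_univ j) hij
  have heinj : Function.Injective e := fun i j h => hecinj (by simp only [h])
  -- the permutation matching e with α
  have hex : ∀ k : Fin n, ∃ m, α m = e k := by
    intro k
    have hkmem : (e k : ℂ) ∈ Finset.univ.val.map (fun i : Fin n => (α i : ℂ)) := by
      rw [hms]; exact Multiset.mem_map_of_mem _ (Finset.mem_univ k)
    obtain ⟨m, _, hm⟩ := Multiset.mem_map.mp hkmem
    exact ⟨m, Complex.ofReal_injective hm⟩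
  choose g hg using hex
  have hginj : Function.Injective g := fun i j h => heinj (by rw [← hg i, ← hg j, h])
  have hgsurj : Function.Surjective g := Finite.surjective_of_injective hginj
  -- the weights
  set N : Fin n → ℝ := fun k => ∏ i, (e k - β i) with hN
  set D : Fin n → ℝ := fun k => ∏ i ∈ Finset.univ.erase k, (e k - e i) with hD
  have hDne : ∀ k, D k ≠ 0 := fun k => Finset.prod_ne_zero_iff.mpr fun i hi =>
    sub_ne_zero.mpr fun h => (Finset.mem_erase.mp hi).1 (heinj h).symm
  have hND : ∀ k, N k * D k < 0 := by
    intro k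
    have hek : e k = α (g k) := (hg k).symm
    have hDk : D k = ∏ j ∈ Finset.univ.erase (g k), (α (g k) - α j) := by
      rw [hD]
      calc ∏ i ∈ Finset.univ.erase k, (e k - e i)
          = ∏ i ∈ Finset.univ.erase k, (α (g k) - α (g i)) :=
            Finset.prod_congr rfl fun i _ => by rw [hek, hg i]
        _ = ∏ j ∈ (Finset.univ.erase k).image g, (α (g k) - α j) :=
            (Finset.prod_image (f := fun j => α (g k) - α j) (g := g)
              (s := Finset.univ.erase k) (fun i _ j _ h => hginj h)).symm
        _ = _ := by rw [Finset.image_erase hginj, Finset.image_univ_of_surjective hgsurj]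
    have hNk : N k = (α (g k) - β (g k)) * ∏ i ∈ Finset.univ.erase (g k), (α (g k) - β i) := by
      rw [hN]
      simp only [hek]
      exact (Finset.mul_prod_erase Finset.univ _ (Finset.mem_univ (g k))).symm
    rw [hNk, hDk, mul_assoc, ← Finset.prod_mul_distrib]
    apply mul_neg_of_neg_of_pos
    · exact sub_neg.mpr (hint1 (g k))
    · apply Finset.prod_pos
      intro i hi
      rcases lt_or_gt_of_ne (Finset.mem_erase.mp hi).1 with h | h
      · exact mul_pos (sub_pos.mpr (hint2 i (g k) h)) (sub_pos.mpr (hαmono h))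
      · exact mul_pos_of_neg_of_neg (sub_neg.mpr ((hαmono h).trans (hint1 i)))
          (sub_neg.mpr (hαmono h))
  set t : Fin n → ℝ := fun k => -N k / D k with ht
  have ht_pos : ∀ k, 0 < t k := by
    intro k
    have h2 : t k = -(N k * D k) / (D k * D k) := by
      rw [ht]
      rw [div_eq_div_iff (hDne k) (mul_ne_zero (hDne k) (hDne k))]
      ring
    rw [h2]
    exact div_pos (neg_pos.mpr (hND k)) (mul_self_pos.mpr (hDne k))
  have htD : ∀ k, t k * D k = -N k := fun k => div_mul_cancel₀ _ (hDne k)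
  have htc : ∀ k, ((t k : ℝ) : ℂ) * ∏ i ∈ Finset.univ.erase k, ((e k : ℂ) - (e i : ℂ))
      = - ∏ i, ((e k : ℂ) - (β i : ℂ)) := by
    intro k
    have h0 := congrArg (fun x : ℝ => (x : ℂ)) (htD k)
    simp only [hN, hD] at h0
    push_cast at h0
    exact h0
  -- the rank one perturbation
  set w : Fin n → ℂ := fun i => ((Real.sqrt (t i) : ℝ) : ℂ) with hw
  have hw2 : ∀ i, w i * w i = ((t i : ℝ) : ℂ) := by
    intro i
    rw [hw]
    push_cast [← Complex.ofReal_mul]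
    rw [Real.mul_self_sqrt (le_of_lt (ht_pos i))]
  set M : Matrix (Fin n) (Fin n) ℂ := Matrix.vecMulVec w w with hM
  set B : Matrix (Fin n) (Fin n) ℂ := U * (Dg + M) * star U with hB
  refine ⟨B, ?_, ?_, ?_⟩
  · -- Hermitian
    have hDgH : Dg.conjTranspose = Dg := by
      ext i j
      rcases eq_or_ne i j with rfl | hij
      · rw [Matrix.conjTranspose_apply, hDg, Matrix.diagonal_apply_eq,
          Complex.star_def, Complex.conj_ofReal]
      · rw [Matrix.conjTranspose_apply, hDg, Matrix.diagonal_apply_ne _ (Ne.symm hij),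
          Matrix.diagonal_apply_ne _ hij, star_zero]
    have hMH : M.conjTranspose = M := by
      ext i j
      rw [hM, Matrix.conjTranspose_apply, Matrix.vecMulVec_apply, Matrix.vecMulVec_apply,
        star_mul', hw]
      simp only [Complex.star_def, Complex.conj_ofReal]
      ring
    have hPH : (Dg + M).conjTranspose = Dg + M := by rw [Matrix.conjTranspose_add, hDgH, hMH]
    show B.conjTranspose = B
    rw [hB, Matrix.conjTranspose_mul, Matrix.conjTranspose_mul, hPH,
      Matrix.star_eq_conjTranspose, Matrix.conjTranspose_conjTranspose, ← Matrix.mul_assoc]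
  · -- charpoly
    have h1 : B.charpoly = (Dg + M).charpoly := charpoly_unitary_conj U' (Dg + M)
    have hP := prod_X_sub_C_sub_sum_eq hn (fun i => (e i : ℂ)) (fun i => (β i : ℂ)) hecinj
      (fun j => ((t j : ℝ) : ℂ)) htc
    beta_reduce at hP
    rw [h1, ← hP]
    apply RatFunc.algebraMap_injective ℂ
    have hcp : (Dg + M).charpoly = (Matrix.charmatrix (Dg + M)).det := rfl
    have hch : (Matrix.charmatrix (Dg + M)).map (algebraMap ℂ[X] (RatFunc ℂ))
        = Matrix.diagonal (fun i => algebraMap ℂ[X] (RatFunc ℂ) (X - C ((e i : ℝ) : ℂ)))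
          + Matrix.vecMulVec (fun i => -(algebraMap ℂ[X] (RatFunc ℂ) (C (w i))))
              (fun i => algebraMap ℂ[X] (RatFunc ℂ) (C (w i))) := by
      ext i j
      rcases eq_or_ne i j with rfl | hij
      · simp only [Matrix.map_apply, Matrix.charmatrix_apply_eq, Matrix.add_apply, hDg, hM,
          Matrix.diagonal_apply_eq, Matrix.vecMulVec_apply]
        rw [C_add, C_mul, sub_add_eq_sub_sub, map_sub, map_mul]
        ring
      · simp only [Matrix.map_apply, Matrix.charmatrix_apply_ne _ _ _ hij, Matrix.add_apply,
          hDg, hM, Matrix.diagonal_apply_ne _ hij, Matrix.vecMulVec_apply, zero_add]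
        rw [C_mul, map_neg, map_mul]
        ring
    rw [hcp, RingHom.map_det, RingHom.mapMatrix_apply, hch,
      det_diag_add_vecMulVec _ _ _ (fun i => fun hh => X_sub_C_ne_zero ((e i : ℝ) : ℂ)
        (RatFunc.algebraMap_injective ℂ (hh.trans (map_zero _).symm)))]
    rw [map_sub, map_prod, map_sum, sub_eq_add_neg, ← Finset.sum_neg_distrib]
    congr 1
    refine Finset.sum_congr rfl fun j _ => ?_
    rw [map_mul, map_prod, neg_mul, ← map_mul, ← C_mul, hw2 j]
    ring
  · -- rank
    have hAB : A - B = U * (-M) * star U := by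
      rw [hAspec, hB, Matrix.mul_add, Matrix.add_mul, Matrix.mul_neg, Matrix.neg_mul]
      abel
    rw [hAB]
    have hdetU : IsUnit U.det := Matrix.UnitaryGroup.det_isUnit U'
    have hdetsU : IsUnit (star U).det := by
      have : star U = ((star U' : Matrix.unitaryGroup (Fin n) ℂ) : Matrix (Fin n) (Fin n) ℂ) := by
        rw [hU]; rfl
      rw [this]
      exact Matrix.UnitaryGroup.det_isUnit (star U')
    rw [Matrix.mul_assoc, Matrix.rank_mul_eq_right_of_isUnit_det U _ hdetU,
      Matrix.rank_mul_eq_left_of_isUnit_det (star U) (-M) hdetsU]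
    have hle : (-M).rank ≤ 1 := by
      have hneg : -M = Matrix.vecMulVec (fun i => -w i) w := by
        ext i j
        simp [hM, Matrix.vecMulVec_apply, neg_mul]
      rw [hneg, Matrix.vecMulVec_eq Unit]
      refine le_trans (Matrix.rank_mul_le_left _ _) ?_
      refine le_trans (Matrix.rank_le_card_width _) ?_
      simp
    have hne : (-M).rank ≠ 0 := by
      intro h0
      have hrange : LinearMap.range (-M).mulVecLin = ⊥ := by
        rw [Matrix.rank] at h0
        exact Submodule.finrank_eq_zero.mp h0
      have hzero : (-M).mulVecLin = 0 := LinearMap.range_eq_bot.mp hrange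
      set k0 : Fin n := ⟨0, hn⟩ with hk0
      have h3 : (-M).mulVecLin (Pi.single k0 1) k0 = 0 := by rw [hzero]; rfl
      rw [Matrix.mulVecLin_apply] at h3
      have h4 : ((-M).mulVec (Pi.single k0 1)) k0 = -(w k0 * w k0) := by
        rw [Matrix.mulVec_single]
        simp [hM, Matrix.vecMulVec_apply]
      rw [h4, neg_eq_zero, hw2 k0] at h3
      exact absurd (Complex.ofReal_eq_zero.mp h3) (ne_of_gt (ht_pos k0))
    omega
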